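/- Let α_j : ℝ^m → ℝ (j = 1,...,n) be k-times continuously differentiable functions with α_j(u) ≥ 0, α_j(z_j) = 0, α_j(u) > 0 for u ≠ z_j, and D^β α_j(z_j) = 0 for all multi-indices β with 0 < |β| ≤ k, where z_1,...,z_n are distinct points. Then each cardinal function g_i(u) = (∏_{j≠i} α_j(u))/(∑_{k'=1}^n ∏_{j≠k'} α_j(u)) is k-times continuously differentiable in a neighborhood of each node z_l, and D^β g_i(z_l) = 0 for all 0 < |β| ≤ k and all i, l. -/

import Mathlib

open Finset

theorem cheney_cardinal_derivatives_vanish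
    {m : ℕ} {n : ℕ} (hn : 2 ≤ n) (k : ℕ)
    (z : Fin n → EuclideanSpace ℝ (Fin m)) (hz : Function.Injective z)
    (α : Fin n → EuclideanSpace ℝ (Fin m) → ℝ)
    (hα : ∀ j, ContDiff ℝ k (α j))
    (hα0 : ∀ j u, 0 ≤ α j u)
    (hαz : ∀ j, α j (z j) = 0)
    (hαpos : ∀ j u, u ≠ z j → 0 < α j u)
    (hαderiv : ∀ j, ∀ b : ℕ, 0 < b → b ≤ k →
      iteratedFDeriv ℝ b (α j) (z j) = 0)
    (g : Fin n → EuclideanSpace ℝ (Fin m) → ℝ)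
    (hg : ∀ i u, g i u =
      (∏ j ∈ univ.erase i, α j u) / (∑ k' , ∏ j ∈ univ.erase k', α j u)) :
    ∀ i l, ContDiffAt ℝ k (g i) (z l) ∧
      ∀ b : ℕ, 0 < b → b ≤ k → iteratedFDeriv ℝ b (g i) (z l) = 0 := by
  have hnonempty : Nonempty (Fin n) := ⟨⟨0, by omega⟩⟩
  -- The denominator S is everywhere positive
  set S : EuclideanSpace ℝ (Fin m) → ℝ :=
    fun u => ∑ k', ∏ j ∈ univ.erase k', α j u with hSdef
  have hS : ∀ u, 0 < S u := by
    intro u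
    apply Finset.sum_pos'
    · intro i _
      exact Finset.prod_nonneg fun j _ => hα0 j u
    · by_cases h : ∃ j0, u = z j0
      · obtain ⟨j0, hj0⟩ := h
        refine ⟨j0, Finset.mem_univ _, Finset.prod_pos fun j hj => ?_⟩
        refine hαpos j u fun huz => ?_
        exact (Finset.mem_erase.mp hj).1 (hz (hj0.symm.trans huz)).symm
      · push_neg at h
        obtain ⟨j0⟩ := hnonempty
        exact ⟨j0, Finset.mem_univ _,
          Finset.prod_pos fun j _ => hαpos j u (h j)⟩
  have hScd : ContDiff ℝ k S :=
    ContDiff.sum fun i _ => contDiff_prod fun j _ => hα j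
  -- each g i is globally C^k
  have hgeq : ∀ i, g i = fun u => (∏ j ∈ univ.erase i, α j u) / S u :=
    fun i => funext fun u => hg i u
  have hgcd : ∀ i, ContDiff ℝ k (g i) := by
    intro i
    rw [hgeq i]
    exact (contDiff_prod fun j _ => hα j).div hScd fun u => (hS u).ne'
  -- all iterated derivatives of α l up to order k vanish at z l (including order 0)
  have hαall : ∀ l, ∀ b : ℕ, b ≤ k → iteratedFDeriv ℝ b (α l) (z l) = 0 := by
    intro l b hb
    rcases Nat.eq_zero_or_pos b with hb0 | hb0
    · subst hb0
      ext x
      simp [iteratedFDeriv_zero_apply, hαz l]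
    · exact hαderiv l b hb0 hb
  -- vanishing for i ≠ l
  have hvanish : ∀ i l : Fin n, i ≠ l → ∀ b : ℕ, 0 < b → b ≤ k →
      iteratedFDeriv ℝ b (g i) (z l) = 0 := by
    intro i l hil b _ hbk
    have hlmem : l ∈ univ.erase i := Finset.mem_erase.mpr ⟨hil.symm, Finset.mem_univ l⟩
    set h : EuclideanSpace ℝ (Fin m) → ℝ :=
      fun u => (∏ j ∈ (univ.erase i).erase l, α j u) / S u with hhdef
    have hhcd : ContDiff ℝ k h :=
      (contDiff_prod fun j _ => hα j).div hScd fun u => (hS u).ne'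
    have hgi : g i = fun u => α l u * h u := by
      funext u
      rw [hg i u, hhdef]
      rw [← Finset.mul_prod_erase _ _ hlmem, mul_div_assoc]
    rw [hgi]
    have hbound := norm_iteratedFDeriv_mul_le (𝕜 := ℝ)
      (hα l) hhcd (z l) (n := b) (Nat.cast_le.mpr hbk)
    have hzero : ∑ i' ∈ Finset.range (b + 1),
        (b.choose i' : ℝ) * ‖iteratedFDeriv ℝ i' (α l) (z l)‖ *
          ‖iteratedFDeriv ℝ (b - i') h (z l)‖ = 0 := by
      apply Finset.sum_eq_zero
      intro i' hi'
      have : iteratedFDeriv ℝ i' (α l) (z l) = 0 :=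
        hαall l i' (le_trans (Nat.lt_succ_iff.mp (Finset.mem_range.mp hi')) hbk)
      rw [this]
      simp
    rw [hzero] at hbound
    exact norm_le_zero_iff.mp hbound
  intro i l
  refine ⟨(hgcd i).contDiffAt, ?_⟩
  rcases eq_or_ne i l with rfl | hil
  · -- i = l : use g l = 1 - ∑_{j ≠ l} g j
    intro b hb hbk
    have hsum1 : ∀ u, ∑ j, g j u = 1 := by
      intro u
      simp_rw [hg]
      rw [← Finset.sum_div, div_self (hS u).ne']
    have hrepr : g i = fun u => 1 - ∑ j ∈ univ.erase i, g j u := by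
      funext u
      have := hsum1 u
      rw [← Finset.add_sum_erase _ _ (Finset.mem_univ i)] at this
      linarith
    set F : EuclideanSpace ℝ (Fin m) → ℝ := fun u => ∑ j ∈ univ.erase i, g j u with hFdef
    have hFcd : ContDiff ℝ b F := by
      apply ContDiff.sum
      intro j _
      exact (hgcd j).of_le (Nat.cast_le.mpr hbk)
    have hform : g i = -(F + fun _ => (-1 : ℝ)) := by
      rw [hrepr]
      funext u
      simp only [hFdef, Pi.neg_apply, Pi.add_apply]
      ring
    rw [hform, iteratedFDeriv_neg_apply,
      iteratedFDeriv_add_apply hFcd.contDiffAt contDiff_const.contDiffAt]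
    have hFd : iteratedFDeriv ℝ b F (z i) = 0 := by
      have := iteratedFDeriv_sum (𝕜 := ℝ) (i := b)
        (f := fun j => g j) (u := univ.erase i)
        (fun j _ => (hgcd j).of_le (Nat.cast_le.mpr hbk))
      have h2 : iteratedFDeriv ℝ b F (z i) =
          ∑ j ∈ univ.erase i, iteratedFDeriv ℝ b (g j) (z i) := by
        rw [hFdef]
        simpa using congrFun this (z i)
      rw [h2]
      apply Finset.sum_eq_zero
      intro j hj
      exact hvanish j i (Finset.mem_erase.mp hj).1 b hb hbk
    rw [hFd, iteratedFDeriv_const_of_ne hb.ne']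
    simp
  · exact hvanish i l hil
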